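/- arXiv:2405.02226 — 5 statements merged into one kernel-verified Lean document; each statement's English description precedes it below -/
import Mathlib

section
/- Let V be a real vector space with finite dimension n ≥ 1, let Φ ⊆ V be a finite subset with 0 ∉ Φ, Φ = −Φ, and Φ spanning V, and let f : V → ℝ be a linear functional with f(α) ≠ 0 for every α ∈ Φ. Then there exist elements α₁, …, αₙ ∈ Φ which are linearly independent, satisfy f(αᵢ) > 0 for every i, and such that for all i ≠ j the sum αᵢ + αⱼ does not belong to Φ. -/
open Finset

private lemma li_update_add
    {V : Type*} [AddCommGroup V] [Module ℝ V] {n : ℕ} {α : Fin n → V}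
    (hα : LinearIndependent ℝ α) {i j : Fin n} (hij : i ≠ j) :
    LinearIndependent ℝ (Function.update α i (α i + α j)) := by
  classical
  rw [Fintype.linearIndependent_iff] at hα ⊢
  intro g hg
  have key : ∑ k, g k • Function.update α i (α i + α j) k
      = ∑ k, (Function.update g j (g j + g i)) k • α k := by
    have h1 : ∀ k, g k • Function.update α i (α i + α j) k
        = Function.update (fun k => g k • α k) i (g i • (α i + α j)) k := by
      intro k
      by_cases h : k = i
      · subst h; simp
      · simp [Function.update_of_ne h]
    have h2 : ∀ k, (Function.update g j (g j + g i)) k • α k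
        = Function.update (fun k => g k • α k) j ((g j + g i) • α j) k := by
      intro k
      by_cases h : k = j
      · subst h; simp
      · simp [Function.update_of_ne h]
    simp only [h1, h2]
    rw [Finset.sum_update_of_mem (Finset.mem_univ i),
      Finset.sum_update_of_mem (Finset.mem_univ j)]
    have hji : j ∈ (Finset.univ : Finset (Fin n)) \ {i} := by
      simp [Ne.symm hij]
    have hij' : i ∈ (Finset.univ : Finset (Fin n)) \ {j} := by
      simp [hij]
    rw [← Finset.sum_erase_add _ _ hji, ← Finset.sum_erase_add _ _ hij']
    have hset : ((Finset.univ : Finset (Fin n)) \ {i}).erase j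
        = ((Finset.univ : Finset (Fin n)) \ {j}).erase i := by
      ext k; simp [and_comm]
    rw [hset, smul_add, add_smul]
    abel
  rw [key] at hg
  have hall := hα _ hg
  intro k
  by_cases hk : k = j
  · have h1 := hall j
    have h2 := hall i
    rw [Function.update_self] at h1
    rw [Function.update_of_ne hij] at h2
    rw [hk]; linarith
  · have := hall k
    rwa [Function.update_of_ne hk] at this

/-- **Finding the roots α₁, …, αₙ** (Appendix): given a finite spanning set `Φ` of nonzero
vectors in an `n`-dimensional real vector space with `Φ = -Φ`, and a linear functional `f`
which is nonvanishing on `Φ` (a "regular" functional), there are `n` linearly independent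
elements of `Φ` on which `f` is positive and whose pairwise sums lie outside `Φ`. -/
theorem exists_maximal_positive_roots
    (V : Type*) [AddCommGroup V] [Module ℝ V] [FiniteDimensional ℝ V]
    (n : ℕ) (hn : 1 ≤ n) (hdim : Module.finrank ℝ V = n)
    (Φ : Finset V) (h0 : (0 : V) ∉ Φ)
    (hneg : ∀ α : V, -α ∈ Φ ↔ α ∈ Φ)
    (hspan : Submodule.span ℝ (Φ : Set V) = ⊤)
    (f : V →ₗ[ℝ] ℝ) (hf : ∀ α ∈ Φ, f α ≠ 0) :
    ∃ α : Fin n → V, (∀ i, α i ∈ Φ) ∧ LinearIndependent ℝ α ∧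
      (∀ i, 0 < f (α i)) ∧ ∀ i j : Fin n, i ≠ j → α i + α j ∉ Φ := by
  classical
  set Φp : Finset V := Φ.filter (fun v => 0 < f v) with hΦp
  have hmemp : ∀ v, v ∈ Φp ↔ v ∈ Φ ∧ 0 < f v := by
    intro v; simp [hΦp]
  -- Φp spans V
  have hspanp : Submodule.span ℝ (Φp : Set V) = ⊤ := by
    rw [eq_top_iff, ← hspan, Submodule.span_le]
    intro v hv
    rcases lt_or_gt_of_ne (hf v hv) with hlt | hgt
    · have hmem : -v ∈ Φp := by
        rw [hmemp]
        refine ⟨(hneg v).2 hv, ?_⟩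
        simp only [map_neg]; linarith
      have : -v ∈ Submodule.span ℝ (Φp : Set V) := Submodule.subset_span hmem
      simpa using Submodule.neg_mem _ this
    · exact Submodule.subset_span ((hmemp v).2 ⟨hv, hgt⟩)
  -- a linearly independent family in Φp
  obtain ⟨b, hbsub, hbspan, hbli⟩ := exists_linearIndependent ℝ (Φp : Set V)
  rw [hspanp] at hbspan
  have hbfin : b.Finite := Set.Finite.subset Φp.finite_toSet hbsub
  haveI : Fintype b := hbfin.fintype
  have hcard : Fintype.card b = n := by
    have := Module.finrank_eq_card_basis (Module.Basis.mk hbli (by rw [Subtype.range_coe, hbspan]))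
    rw [hdim] at this
    exact this.symm
  let e : Fin n ≃ b := (Fintype.equivFinOfCardEq hcard).symm
  let g0 : Fin n → V := fun k => (e k : V)
  have hg0mem : ∀ k, g0 k ∈ Φp := fun k => hbsub (e k).2
  have hg0li : LinearIndependent ℝ g0 := hbli.comp e e.injective
  -- the finite set of candidates
  let T : Finset (Fin n → V) :=
    (Fintype.piFinset fun _ : Fin n => Φp).filter (fun g => LinearIndependent ℝ g)
  have hg0T : g0 ∈ T := by
    simp only [T, Finset.mem_filter, Fintype.mem_piFinset]
    exact ⟨hg0mem, hg0li⟩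
  obtain ⟨g, hgT, hmax⟩ := T.exists_max_image (fun g => ∑ k, f (g k)) ⟨g0, hg0T⟩
  simp only [T, Finset.mem_filter, Fintype.mem_piFinset] at hgT
  obtain ⟨hgmem, hgli⟩ := hgT
  refine ⟨g, fun i => ((hmemp _).1 (hgmem i)).1, hgli,
    fun i => ((hmemp _).1 (hgmem i)).2, ?_⟩
  intro i j hij hsum
  -- the replacement family
  set g' : Fin n → V := Function.update g i (g i + g j) with hg'
  have hfi : 0 < f (g i) := ((hmemp _).1 (hgmem i)).2
  have hfj : 0 < f (g j) := ((hmemp _).1 (hgmem j)).2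
  have hsump : g i + g j ∈ Φp := by
    rw [hmemp]
    refine ⟨hsum, ?_⟩
    rw [map_add]; linarith
  have hg'T : g' ∈ T := by
    simp only [T, Finset.mem_filter, Fintype.mem_piFinset]
    constructor
    · intro k
      by_cases hk : k = i
      · subst hk; simpa [hg'] using hsump
      · simpa [hg', Function.update_of_ne hk] using hgmem k
    · exact li_update_add hgli hij
  have hle := hmax g' hg'T
  have hsum' : ∑ k, f (g' k) = f (g j) + ∑ k, f (g k) := by
    have h1 : ∀ k, f (g' k) = Function.update (fun k => f (g k)) i (f (g i + g j)) k := by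
      intro k
      by_cases hk : k = i
      · subst hk; simp [hg']
      · simp [hg', Function.update_of_ne hk]
    simp only [h1]
    rw [Finset.sum_update_of_mem (Finset.mem_univ i),
      ← Finset.sum_erase_add _ (fun k => f (g k)) (Finset.mem_univ i)]
    have : (Finset.univ : Finset (Fin n)) \ {i} = Finset.univ.erase i := by
      ext k; simp [and_comm]
    rw [this, map_add]
    ring
  rw [hsum'] at hle
  linarith
end

section
/- Let m be a natural number, let X and Z be m × m real matrices, and let c be a real number such that X·Z − Z·X = c • Z. Then exp(X) · exp(Z) = exp(e^c • Z) · exp(X), where exp denotes the matrix exponential and e^c = Real.exp c. -/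
open NormedSpace

/-- If `X·Z − Z·X = c • Z` for real `m × m` matrices, then
`exp X * exp Z = exp (e^c • Z) * exp X`. -/
theorem exp_mul_exp_of_bracket_eq_smul
    (m : ℕ) (X Z : Matrix (Fin m) (Fin m) ℝ) (c : ℝ)
    (h : X * Z - Z * X = c • Z) :
    exp X * exp Z = exp (Real.exp c • Z) * exp X := by
  letI : SeminormedRing (Matrix (Fin m) (Fin m) ℝ) := Matrix.linftyOpSemiNormedRing
  letI : NormedRing (Matrix (Fin m) (Fin m) ℝ) := Matrix.linftyOpNormedRing
  letI : NormedAlgebra ℝ (Matrix (Fin m) (Fin m) ℝ) := Matrix.linftyOpNormedAlgebra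
  have hXZ : X * Z = Z * (X + c • 1) := by
    have h' : X * Z = c • Z + Z * X := by
      rw [← h]; abel
    rw [h', mul_add, mul_smul_comm, mul_one, add_comm]
  have key : ∀ n : ℕ, X ^ n * Z = Z * (X + c • 1) ^ n := by
    intro n
    induction n with
    | zero => simp
    | succ n ih =>
      rw [pow_succ, pow_succ, ← mul_assoc, mul_assoc (X ^ n), hXZ, ← mul_assoc, ih, mul_assoc]
  have hmul : exp X * Z = Z * exp (X + c • 1) := by
    rw [exp_eq_tsum ℝ]
    simp only []
    erw [← (expSeries_summable' (𝕂 := ℝ) X).tsum_mul_right Z,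
      ← (expSeries_summable' (𝕂 := ℝ) (X + c • 1)).tsum_mul_left Z]
    refine tsum_congr fun n => ?_
    rw [smul_mul_assoc, key n, mul_smul_comm]
  have hsc : exp (c • (1 : Matrix (Fin m) (Fin m) ℝ)) = Real.exp c • 1 := by
    erw [← Algebra.algebraMap_eq_smul_one, ← algebraMap_exp_comm, Real.exp_eq_exp_ℝ,
      Algebra.algebraMap_eq_smul_one]
  have hmul2 : exp X * Z = Real.exp c • (Z * exp X) := by
    have hc : Commute X (c • (1 : Matrix (Fin m) (Fin m) ℝ)) :=
      (Commute.one_right X).smul_right c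
    rw [hmul, Matrix.exp_add_of_commute X (c • 1) hc, hsc, ← mul_assoc, mul_smul_comm,
      mul_one]
  have hu : IsUnit (exp X) := Matrix.isUnit_exp X
  have hinv : exp X * (exp X)⁻¹ = 1 :=
    Matrix.mul_nonsing_inv _ ((Matrix.isUnit_iff_isUnit_det _).mp hu)
  have hconj : exp X * Z * (exp X)⁻¹ = Real.exp c • Z := by
    rw [hmul2, smul_mul_assoc, mul_assoc, hinv, mul_one]
  calc exp X * exp Z
      = exp X * exp Z * (exp X)⁻¹ * exp X := by
        rw [mul_assoc, Matrix.nonsing_inv_mul _ ((Matrix.isUnit_iff_isUnit_det _).mp hu),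
          mul_one]
    _ = exp (exp X * Z * (exp X)⁻¹) * exp X := by
        rw [Matrix.exp_conj _ _ hu]
    _ = exp (Real.exp c • Z) * exp X := by rw [hconj]
end

section
/- Let L be a Lie algebra over ℝ, let H be an abelian Lie subalgebra of L, let n ≥ 1, and let α₁, …, αₙ : H → ℝ be linearly independent linear functionals. Suppose Z₁, …, Zₙ are nonzero elements of L such that ⁅X, Zᵢ⁆ = αᵢ(X) • Zᵢ for every X ∈ H and every i, and ⁅Zᵢ, Zⱼ⁆ = 0 for all i ≠ j. Then there exists an injective Lie algebra homomorphism from the n-fold direct product 𝔟 × ⋯ × 𝔟 into L, where 𝔟 is the two-dimensional real Lie algebra of upper-triangular traceless 2 × 2 real matrices (those of the form [[t, s],[0, −t]]). -/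
open DirectSum

attribute [local instance 100] LieRing.ofAssociativeRing

/-- The two-dimensional real Lie algebra `𝔟` of upper-triangular traceless `2 × 2` real
matrices, i.e. matrices of the form `[[t, s], [0, -t]]`, viewed as a Lie subalgebra of
`Matrix (Fin 2) (Fin 2) ℝ` with the commutator bracket. -/
def upperTriangularTraceless : LieSubalgebra ℝ (Matrix (Fin 2) (Fin 2) ℝ) where
  carrier := {A | A 1 0 = 0 ∧ A 1 1 = -A 0 0}
  add_mem' := by
    rintro A B ⟨hA1, hA2⟩ ⟨hB1, hB2⟩
    refine ⟨?_, ?_⟩ <;> (simp [Matrix.add_apply, hA1, hA2, hB1, hB2]; try ring)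
  zero_mem' := by simp [Set.mem_setOf_eq]
  smul_mem' := by
    rintro c A ⟨hA1, hA2⟩
    refine ⟨?_, ?_⟩ <;> simp [Matrix.smul_apply, hA1, hA2]
  lie_mem' := by
    rintro A B ⟨hA1, hA2⟩ ⟨hB1, hB2⟩
    refine ⟨?_, ?_⟩ <;>
      (simp [Ring.lie_def, Matrix.sub_apply, Matrix.mul_apply, Fin.sum_univ_two,
        hA1, hA2, hB1, hB2]; try ring)

lemma exists_dual_family {E : Type*} [AddCommGroup E] [Module ℝ E] {n : ℕ}
    (α : Fin n → (E →ₗ[ℝ] ℝ)) (hα : LinearIndependent ℝ α) :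
    ∃ X : Fin n → E, ∀ i j, α j (X i) = if j = i then 2 else 0 := by
  have key : ∀ i : Fin n, ∃ x : E, α i x ≠ 0 ∧ ∀ j, j ≠ i → α j x = 0 := by
    intro i
    by_contra hcon
    push_neg at hcon
    have h : ⨅ (j : {j : Fin n // j ≠ i}), LinearMap.ker (α j.1) ≤ LinearMap.ker (α i) := by
      intro x hx
      rw [Submodule.mem_iInf] at hx
      rw [LinearMap.mem_ker]
      by_contra hne
      obtain ⟨j, hj, hjne⟩ := hcon x hne
      exact hjne (hx ⟨j, hj⟩)
    have hmem : α i ∈ Submodule.span ℝ (Set.range fun j : {j : Fin n // j ≠ i} => α j.1) :=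
      mem_span_of_iInf_ker_le_ker h
    have hrange : (Set.range fun j : {j : Fin n // j ≠ i} => α j.1) = α '' {i}ᶜ := by
      ext f
      constructor
      · rintro ⟨⟨j, hj⟩, rfl⟩; exact ⟨j, hj, rfl⟩
      · rintro ⟨j, hj, rfl⟩; exact ⟨⟨j, hj⟩, rfl⟩
    rw [hrange] at hmem
    exact hα.notMem_span_image (by simp) hmem
  choose x hx0 hx using key
  refine ⟨fun i => (2 / α i (x i)) • x i, fun i j => ?_⟩
  rcases eq_or_ne j i with rfl | hji
  · simp [div_mul_cancel₀, hx0 j]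
  · simp [hx i j hji, if_neg hji]

/-- The Lie-algebra content of the Appendix: given an abelian Lie subalgebra `H`, linearly
independent functionals `α₁, …, αₙ` on `H` and nonzero `Z₁, …, Zₙ` with
`⁅X, Zᵢ⁆ = αᵢ(X) • Zᵢ` and `⁅Zᵢ, Zⱼ⁆ = 0` for `i ≠ j`, the `n`-fold product of the affine
Lie algebra `𝔟` embeds into `L`. -/
theorem exists_injective_lieHom_of_commuting_root_vectors
    (L : Type*) [LieRing L] [LieAlgebra ℝ L]
    (H : LieSubalgebra ℝ L) (hH : IsLieAbelian H)
    (n : ℕ) (hn : 1 ≤ n)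
    (α : Fin n → (H →ₗ[ℝ] ℝ)) (hα : LinearIndependent ℝ α)
    (Z : Fin n → L) (hZ : ∀ i, Z i ≠ 0)
    (hbr : ∀ (X : H) (i : Fin n), ⁅(X : L), Z i⁆ = α i X • Z i)
    (hcomm : ∀ i j : Fin n, i ≠ j → ⁅Z i, Z j⁆ = 0) :
    ∃ φ : (⨁ _ : Fin n, upperTriangularTraceless) →ₗ⁅ℝ⁆ L, Function.Injective φ := by
  classical
  obtain ⟨Xv, hX⟩ := exists_dual_family α hα
  -- basic bracket facts
  have hXX : ∀ i j : Fin n, ⁅((Xv i : L)), ((Xv j : L))⁆ = 0 := by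
    intro i j
    rw [← LieSubalgebra.coe_bracket, trivial_lie_zero]
    simp
  have hXZ : ∀ i j : Fin n, ⁅((Xv i : L)), Z j⁆ = (if j = i then (2:ℝ) else 0) • Z j := by
    intro i j
    rw [hbr (Xv i) j, hX i j]
  have hZX : ∀ i j : Fin n, ⁅Z j, ((Xv i : L))⁆ = -((if j = i then (2:ℝ) else 0) • Z j) := by
    intro i j
    rw [← lie_skew, hXZ]
  -- the component maps
  have fprop : ∀ (i : Fin n) (A B : upperTriangularTraceless),
      ⁅(A.1 0 0) • (Xv i : L) + (A.1 0 1) • Z i, (B.1 0 0) • (Xv i : L) + (B.1 0 1) • Z i⁆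
        = (2 * (A.1 0 0 * B.1 0 1) - 2 * (A.1 0 1 * B.1 0 0)) • Z i := by
    intro i A B
    simp only [lie_add, add_lie, lie_smul, smul_lie, lie_self, smul_zero, zero_add, add_zero,
      hXX, hXZ, hZX, if_pos rfl, smul_neg, smul_smul]
    rw [add_comm, ← sub_eq_add_neg, ← sub_smul]
    congr 1
    simp only [if_true]
    ring
  let f : ∀ i : Fin n, upperTriangularTraceless →ₗ⁅ℝ⁆ L := fun i =>
    { toFun := fun A => (A.1 0 0) • (Xv i : L) + (A.1 0 1) • Z i
      map_add' := by
        intro A B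
        have hco : ((A + B : upperTriangularTraceless) : Matrix (Fin 2) (Fin 2) ℝ)
            = A.1 + B.1 := rfl
        simp only [hco, Matrix.add_apply, add_smul]
        abel
      map_smul' := by
        intro c A
        have hco : ((c • A : upperTriangularTraceless) : Matrix (Fin 2) (Fin 2) ℝ)
            = c • A.1 := rfl
        simp only [hco, Matrix.smul_apply, smul_eq_mul, RingHom.id_apply,
          smul_add, smul_smul]
      map_lie' := by
        intro A B
        obtain ⟨hA1, hA2⟩ := A.2
        obtain ⟨hB1, hB2⟩ := B.2
        have hbval : (⁅A, B⁆ : upperTriangularTraceless).1 = ⁅A.1, B.1⁆ := rfl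
        simp only [hbval, Ring.lie_def, Matrix.sub_apply, Matrix.mul_apply, Fin.sum_univ_two,
          hA1, hA2, hB1, hB2, fprop i A B]
        rw [show (A.1 0 0 * B.1 0 0 + A.1 0 1 * 0 - (B.1 0 0 * A.1 0 0 + B.1 0 1 * 0)) = 0 by ring]
        rw [zero_smul, zero_add]
        congr 1
        ring }
  have hf : Pairwise fun i j => ∀ (x y : upperTriangularTraceless), ⁅f i x, f j y⁆ = 0 := by
    intro i j hij x y
    show ⁅(x.1 0 0) • (Xv i : L) + (x.1 0 1) • Z i, (y.1 0 0) • (Xv j : L) + (y.1 0 1) • Z j⁆ = 0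
    simp [lie_add, add_lie, lie_smul, smul_lie, hXX, hXZ, hZX, hcomm i j hij,
      if_neg (Ne.symm hij), if_neg hij]
  refine ⟨DirectSum.toLieAlgebra (R := ℝ) L f hf, ?_⟩
  set φ := DirectSum.toLieAlgebra (R := ℝ) L f hf with hφ
  have hof : ∀ (i : Fin n) (a : upperTriangularTraceless),
      φ (DirectSum.of _ i a) = (a.1 0 0) • (Xv i : L) + (a.1 0 1) • Z i := by
    intro i a
    show DirectSum.toModule ℝ (Fin n) L (fun i => (f i : upperTriangularTraceless →ₗ[ℝ] L))
      (DirectSum.of _ i a) = _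
    rw [← DirectSum.lof_eq_of ℝ, DirectSum.toModule_lof]
    rfl
  have hker : ∀ x, φ x = 0 → x = 0 := by
    intro x hx
    have hsum : φ x = ∑ i, (((x i).1 0 0) • (Xv i : L) + ((x i).1 0 1) • Z i) := by
      conv_lhs => rw [← DirectSum.sum_univ_of x]
      rw [show φ (∑ i, DirectSum.of _ i (x i)) = ∑ i, φ (DirectSum.of _ i (x i)) from
        map_sum φ.toLinearMap _ _]
      exact Finset.sum_congr rfl fun i _ => hof i (x i)
    rw [hx] at hsum
    -- first kill the Z-coefficients
    have hb : ∀ j, (x j).1 0 1 = 0 := by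
      intro j
      have hterm : ∀ i ∈ Finset.univ,
          ⁅((Xv j : L)), ((x i).1 0 0) • (Xv i : L) + ((x i).1 0 1) • Z i⁆
          = (if i = j then (2:ℝ) * (x i).1 0 1 else 0) • Z i := by
        intro i _
        rw [lie_add, lie_smul, lie_smul, hXX j i, hXZ j i, smul_zero, zero_add, smul_smul]
        rcases eq_or_ne i j with rfl | hij
        · simp [mul_comm]
        · simp [if_neg hij]
      have h0 : ((2:ℝ) * (x j).1 0 1) • Z j = 0 := by
        calc ((2:ℝ) * (x j).1 0 1) • Z j
            = ∑ i, (if i = j then (2:ℝ) * (x i).1 0 1 else 0) • Z i := by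
              rw [Finset.sum_eq_single j (by intro b _ hb; simp [if_neg hb])
                (by intro h; exact absurd (Finset.mem_univ j) h), if_pos rfl]
          _ = ∑ i, ⁅((Xv j : L)), ((x i).1 0 0) • (Xv i : L) + ((x i).1 0 1) • Z i⁆ :=
              (Finset.sum_congr rfl hterm).symm
          _ = ⁅((Xv j : L)), ∑ i, (((x i).1 0 0) • (Xv i : L) + ((x i).1 0 1) • Z i)⁆ :=
              (map_sum (LieAlgebra.ad ℝ L (Xv j : L)) _ _).symm
          _ = ⁅((Xv j : L)), (0 : L)⁆ := by rw [← hsum]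
          _ = 0 := lie_zero _
      rcases smul_eq_zero.mp h0 with h | h
      · rcases mul_eq_zero.mp h with h2 | h2
        · norm_num at h2
        · exact h2
      · exact absurd h (hZ j)
    -- then kill the X-coefficients
    have hsum' : (0 : L) = ∑ i, ((x i).1 0 0) • (Xv i : L) := by
      rw [hsum]
      exact Finset.sum_congr rfl fun i _ => by rw [hb i, zero_smul, add_zero]
    have hH0 : (∑ i, ((x i).1 0 0) • Xv i : H) = 0 := by
      have : ((∑ i, ((x i).1 0 0) • Xv i : H) : L) = ∑ i, ((x i).1 0 0) • (Xv i : L) := by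
        push_cast [AddSubmonoidClass.coe_finset_sum]
        rfl
      exact Subtype.ext (by rw [this, ← hsum']; rfl)
    have ha : ∀ j, (x j).1 0 0 = 0 := by
      intro j
      have := congrArg (α j) hH0
      rw [map_sum, map_zero] at this
      have heval : ∀ i ∈ Finset.univ, α j (((x i).1 0 0) • Xv i)
          = if i = j then 2 * (x i).1 0 0 else 0 := by
        intro i _
        rw [map_smul, hX i j, smul_eq_mul]
        rcases eq_or_ne i j with rfl | hij
        · simp [mul_comm]
        · simp [if_neg (Ne.symm hij), if_neg hij]
      rw [Finset.sum_congr rfl heval, Finset.sum_eq_single j (by intro b _ hb; simp [if_neg hb])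
        (by intro h; exact absurd (Finset.mem_univ j) h), if_pos rfl] at this
      linarith
    refine DFinsupp.ext fun i => Subtype.ext (Matrix.ext fun k l => ?_)
    fin_cases k <;> fin_cases l
    · simpa using ha i
    · simpa using hb i
    · simpa using (x i).2.1
    · simpa [( x i).2.2] using ha i
  intro u v huv
  have hs : φ (u - v) = 0 := by
    rw [show φ (u - v) = φ u - φ v from map_sub φ.toLinearMap u v, huv, sub_self]
  exact sub_eq_zero.mp (hker _ hs)
end

section
/- For all points z and w of the hyperbolic upper half-plane with equal imaginary parts (z.im = w.im), letting d = dist(z, w) be their hyperbolic distance, the two points z₁ and w₁ obtained by moving z and w hyperbolic arclength d along the upward vertical geodesics (i.e. z₁ has real part z.re and imaginary part z.im · e^d, and w₁ has real part w.re and imaginary part w.im · e^d) satisfy dist(z₁, w₁) ≤ 1. -/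
open UpperHalfPlane

lemma arsinh_le_self_of_nonneg {x : ℝ} (hx : 0 ≤ x) : Real.arsinh x ≤ x := by
  rw [← Real.sinh_le_sinh, Real.sinh_arsinh]
  exact Real.self_le_sinh_iff.mpr hx

/-- Lemma 4.3 in `ℍ²`: if `z, w` lie on a common horocycle centered at `∞` (equal imaginary
parts) and we flow both of them distance `d = dist z w` along the upward vertical geodesics
toward `∞`, the resulting points are at hyperbolic distance at most `1`. -/
theorem dist_le_one_of_flow_toward_infinity (z w : ℍ) (h : z.im = w.im) :
    dist (UpperHalfPlane.mk ⟨z.re, z.im * Real.exp (dist z w)⟩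
            (mul_pos z.im_pos (Real.exp_pos _)))
         (UpperHalfPlane.mk ⟨w.re, w.im * Real.exp (dist z w)⟩
            (mul_pos w.im_pos (Real.exp_pos _))) ≤ 1 := by
  have hy0 : 0 < z.im := z.im_pos
  have hr0 : (0 : ℝ) ≤ dist z.re w.re := dist_nonneg
  set r : ℝ := dist z.re w.re
  set y : ℝ := z.im
  set s : ℝ := r / (2 * y) with hs
  have hs0 : 0 ≤ s := by positivity
  have hdzw : dist (z : ℂ) (w : ℂ) = r := Complex.dist_of_im_eq h
  have hd : dist z w = 2 * Real.arsinh s := by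
    rw [UpperHalfPlane.dist_eq, hdzw, ← h, Real.sqrt_mul_self hy0.le]
  have hexp : Real.exp (dist z w) = (s + Real.sqrt (1 + s ^ 2)) ^ 2 := by
    rw [hd, two_mul, Real.exp_add, ← Real.exp_arsinh, sq]
  rw [UpperHalfPlane.dist_eq]
  have him : (UpperHalfPlane.mk ⟨z.re, z.im * Real.exp (dist z w)⟩
      (mul_pos z.im_pos (Real.exp_pos _))).im = y * Real.exp (dist z w) := rfl
  have him' : (UpperHalfPlane.mk ⟨w.re, w.im * Real.exp (dist z w)⟩
      (mul_pos w.im_pos (Real.exp_pos _))).im = y * Real.exp (dist z w) := by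
    show w.im * Real.exp (dist z w) = y * Real.exp (dist z w)
    rw [← h]
  have hdc : dist ((UpperHalfPlane.mk ⟨z.re, z.im * Real.exp (dist z w)⟩
      (mul_pos z.im_pos (Real.exp_pos _))) : ℂ)
      ((UpperHalfPlane.mk ⟨w.re, w.im * Real.exp (dist z w)⟩
      (mul_pos w.im_pos (Real.exp_pos _))) : ℂ) = r := by
    refine (Complex.dist_of_im_eq ?_).trans rfl
    show z.im * Real.exp (dist z w) = w.im * Real.exp (dist z w)
    exact congrArg (fun t => t * Real.exp (dist z w)) h
  rw [hdc, him, him', Real.sqrt_mul_self (by positivity)]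
  have hsq : (1 : ℝ) ≤ Real.sqrt (1 + s ^ 2) := by
    nlinarith [Real.sq_sqrt (show (0:ℝ) ≤ 1 + s ^ 2 by positivity),
      Real.sqrt_nonneg (1 + s ^ 2)]
  have harg : r / (2 * (y * Real.exp (dist z w))) ≤ 1 / 2 := by
    rw [hexp]
    have hden : 2 * y * (1 + 2 * s) ≤ 2 * (y * (s + Real.sqrt (1 + s ^ 2)) ^ 2) := by
      have : (1 + 2 * s) ≤ (s + Real.sqrt (1 + s ^ 2)) ^ 2 := by nlinarith
      nlinarith
    have h1 : r / (2 * (y * (s + Real.sqrt (1 + s ^ 2)) ^ 2)) ≤ r / (2 * y * (1 + 2 * s)) :=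
      div_le_div_of_nonneg_left hr0 (by positivity) hden
    refine h1.trans ?_
    rw [div_le_div_iff₀ (by positivity) (by norm_num)]
    have hrs : r = s * (2 * y) := by rw [hs]; field_simp
    nlinarith
  have harg0 : 0 ≤ r / (2 * (y * Real.exp (dist z w))) := by positivity
  calc 2 * Real.arsinh (r / (2 * (y * Real.exp (dist z w))))
      ≤ 2 * (r / (2 * (y * Real.exp (dist z w)))) := by
        have := arsinh_le_self_of_nonneg harg0; linarith
    _ ≤ 2 * (1 / 2) := by linarith
    _ = 1 := by norm_num
end

section
/- For all points z and w of the hyperbolic upper half-plane with z.im ≤ w.im, define z' to be the point with real part z.re and imaginary part w.im, set d₁ = dist(z', w), and define z'' to be the point with real part z.re and imaginary part w.im · e^{d₁}, and w'' the point with real part w.re and imaginary part w.im · e^{d₁}. Then dist(z, z'') + dist(z'', w'') + dist(w'', w) ≤ 3 · dist(z, w) + 1. -/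
open UpperHalfPlane

/-- Corollary 2.9 in `ℍ²` with `η = ∞` and `δ = 1`: the quasi-geodesic path
`z → z'' → w'' → w` has total length at most `3 · dist z w + 1`. Here `z'` is the point on
the vertical ray from `z` lying on the same horosphere (centered at `∞`) as `w`,
`d₁ = dist z' w`, and `z''`, `w''` are obtained from `z'`, `w` by moving hyperbolic
arclength `d₁` up the vertical geodesics. -/
theorem quasi_geodesic_path_length_le (z w : ℍ) (h : z.im ≤ w.im) :
    let z' : ℍ := UpperHalfPlane.mk ⟨z.re, w.im⟩ w.im_pos
    let d₁ : ℝ := dist z' w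
    let z'' : ℍ := UpperHalfPlane.mk ⟨z.re, w.im * Real.exp d₁⟩
      (mul_pos w.im_pos (Real.exp_pos _))
    let w'' : ℍ := UpperHalfPlane.mk ⟨w.re, w.im * Real.exp d₁⟩
      (mul_pos w.im_pos (Real.exp_pos _))
    dist z z'' + dist z'' w'' + dist w'' w ≤ 3 * dist z w + 1 := by
  intro z' d₁ z'' w''
  have ha : (0:ℝ) < z.im := z.im_pos
  have hb : (0:ℝ) < w.im := w.im_pos
  have hd₁0 : 0 ≤ d₁ := dist_nonneg
  have hz'im : z'.im = w.im := rfl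
  have hz'coe : (z' : ℂ) = ⟨z.re, w.im⟩ := rfl
  -- the real horizontal distance
  set X : ℝ := dist z.re w.re / (2 * w.im) with hX
  have hX0 : 0 ≤ X := by positivity
  -- d₁ = 2 arsinh X
  have hd₁ : d₁ = 2 * Real.arsinh X := by
    rw [show d₁ = dist z' w from rfl, UpperHalfPlane.dist_eq]
    congr 1
    rw [Complex.dist_of_im_eq (by simp [hz'coe, UpperHalfPlane.coe_im])]
    have h0 : √(z'.im * w.im) = w.im := by
      rw [hz'im, Real.sqrt_mul_self hb.le]
    rw [h0, hz'coe, hX]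
    rfl
  -- d₁ ≤ dist z w
  have hd₁le : d₁ ≤ dist z w := by
    rw [hd₁, UpperHalfPlane.dist_eq]
    have h1 : dist z.re w.re ≤ dist (z : ℂ) w := by
      rw [Real.dist_eq, Complex.dist_eq]
      simpa using Complex.abs_re_le_norm ((z:ℂ) - (w:ℂ))
    have h2 : √(z.im * w.im) ≤ w.im := by
      calc √(z.im * w.im) ≤ √(w.im * w.im) := by
            apply Real.sqrt_le_sqrt; nlinarith
        _ = w.im := Real.sqrt_mul_self hb.le
    have h3 : (0:ℝ) < √(z.im * w.im) := Real.sqrt_pos.2 (by positivity)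
    have : X ≤ dist (z : ℂ) w / (2 * √(z.im * w.im)) := by
      rw [hX]
      apply div_le_div₀ (by positivity) h1 (by positivity)
      nlinarith
    exact mul_le_mul_of_nonneg_left (Real.arsinh_le_arsinh.2 this) (by norm_num)
  -- log w.im - log z.im ≤ dist z w
  have hlogle : Real.log w.im - Real.log z.im ≤ dist z w := by
    have := UpperHalfPlane.dist_log_im_le z w
    rw [Real.dist_eq, abs_sub_comm] at this
    exact (le_abs_self _).trans this
  have hloglog : Real.log z.im ≤ Real.log w.im := Real.log_le_log ha h
  -- dist z z''
  have hzz'' : dist z z'' = Real.log w.im + d₁ - Real.log z.im := by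
    rw [UpperHalfPlane.dist_of_re_eq (show z.re = z''.re from rfl)]
    have : z''.im = w.im * Real.exp d₁ := rfl
    rw [this, Real.log_mul hb.ne' (Real.exp_pos _).ne', Real.log_exp, Real.dist_eq,
      abs_of_nonpos (by linarith)]
    ring
  -- dist w'' w
  have hw''w : dist w'' w = d₁ := by
    rw [UpperHalfPlane.dist_of_re_eq (show w''.re = w.re from rfl)]
    have : w''.im = w.im * Real.exp d₁ := rfl
    rw [this, Real.log_mul hb.ne' (Real.exp_pos _).ne', Real.log_exp, Real.dist_eq,
      abs_of_nonneg (by linarith)]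
    ring
  -- dist z'' w'' ≤ 1
  have hmid : dist z'' w'' ≤ 1 := by
    have him : z''.im = w.im * Real.exp d₁ := rfl
    have harg : dist (z'' : ℂ) w'' / (2 * √(z''.im * w''.im)) = X / Real.exp d₁ := by
      rw [Complex.dist_of_im_eq (show ((z'':ℍ):ℂ).im = ((w'':ℍ):ℂ).im from rfl)]
      have : √(z''.im * w''.im) = w.im * Real.exp d₁ := by
        show √((w.im * Real.exp d₁) * (w.im * Real.exp d₁)) = _
        exact Real.sqrt_mul_self (by positivity)
      rw [this, hX]
      show dist z.re w.re / (2 * (w.im * Real.exp d₁)) = _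
      rw [div_div, mul_assoc]
    rw [UpperHalfPlane.dist_eq, harg]
    -- X / exp d₁ ≤ 1/2 ≤ sinh (1/2)
    have hs : √(1 + X ^ 2) ≥ 1 := by
      have := Real.sqrt_le_sqrt (show (1:ℝ) ≤ 1 + X ^ 2 by nlinarith)
      rwa [Real.sqrt_one] at this
    have hs0 : √(1 + X ^ 2) ^ 2 = 1 + X ^ 2 := Real.sq_sqrt (by positivity)
    have hexp : Real.exp d₁ = (X + √(1 + X ^ 2)) ^ 2 := by
      rw [hd₁, two_mul, Real.exp_add, Real.exp_arsinh]; ring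
    have hle : X / Real.exp d₁ ≤ 1 / 2 := by
      rw [hexp, div_le_div_iff₀ (by positivity) (by norm_num)]
      nlinarith [hs, hs0, hX0]
    have h12 : (1:ℝ)/2 ≤ Real.sinh (1/2) := (Real.self_lt_sinh_iff.2 (by norm_num)).le
    calc 2 * Real.arsinh (X / Real.exp d₁) ≤ 2 * Real.arsinh (Real.sinh (1/2)) := by
          apply mul_le_mul_of_nonneg_left _ (by norm_num)
          exact Real.arsinh_le_arsinh.2 (hle.trans h12)
      _ = 1 := by rw [Real.arsinh_sinh]; norm_num
  linarith
end
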